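/- Let (M,ρ) be a complete metric space, let f : M → ℝ ∪ {+∞} be proper, lower semicontinuous and bounded below, and let g : M → ℝ be continuous. Assume |∇f|(x) > |∇g|(x) for every x ∈ dom f with |∇f|(x) ≠ 0. Then for each ε > 0 and each x₀ ∈ M there exists x with |∇f|(x) ≤ ε such that f(x) ≤ f(x₀) - ε·ρ(x, x₀) and f(x₀) - g(x₀) ≥ f(x) - g(x). In particular f - g ≥ inf { f(y) - g(y) : |∇f|(y) ≤ ε } everywhere. -/

import Mathlib

open Filter Topology ENNReal

/-- The positive part `[x]⁺` of an extended real, as an element of `ℝ≥0∞`. -/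
noncomputable def erealPos (x : EReal) : ℝ≥0∞ := if x = ⊤ then ⊤ else ENNReal.ofReal x.toReal

/-- The global slope `|∇̃ f|(x) = sup_{y ≠ x} [f x - f y]⁺ / ρ(x,y)` of `f : M → ℝ ∪ {+∞}`. -/
noncomputable def globalSlope {M : Type*} [MetricSpace M] (f : M → EReal) (x : M) : ℝ≥0∞ :=
  ⨆ y ∈ {y : M | y ≠ x}, erealPos (f x - f y) / edist x y

/-- The local slope `|∇ f|(x) = limsup_{y → x, y ≠ x} [f x - f y]⁺ / ρ(x,y)`. -/
noncomputable def localSlope {M : Type*} [MetricSpace M] (f : M → EReal) (x : M) : ℝ≥0∞ :=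
  Filter.limsup (fun y => erealPos (f x - f y) / edist x y) (𝓝[≠] x)

/-- `ε`-global-critical points: `x ∈ dom f` with `f y ≥ f x - ε·ρ(y,x)` for all `y`. -/
def epsCrit {M : Type*} [MetricSpace M] (ε : ℝ) (f : M → EReal) : Set M :=
  {x | f x ≠ ⊤ ∧ ∀ y, f x - ↑(ε * dist y x) ≤ f y}


/-- Ekeland-type minimal point for the relation
`y ⪯ x ↔ f y + ε·d(y,x) ≤ f x ∧ h y ≤ h x`. -/
lemma ekeland_aux {M : Type*} [MetricSpace M] [CompleteSpace M]
    (f : M → EReal) (hlsc : LowerSemicontinuous f) (C : ℝ) (hC : ∀ x, (C : EReal) ≤ f x)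
    (h : M → EReal) (hh : ∀ c : EReal, IsClosed {y | h y ≤ c})
    (ε : ℝ) (hε : 0 < ε) (x₁ : M) (hx₁ : f x₁ ≠ ⊤) :
    ∃ x, (f x + ↑(ε * dist x x₁) ≤ f x₁ ∧ h x ≤ h x₁) ∧
      ∀ y, f y + ↑(ε * dist y x) ≤ f x → h y ≤ h x → y = x := by
  have hbot : ∀ x, f x ≠ ⊥ := fun x => ((EReal.bot_lt_coe C).trans_le (hC x)).ne'
  set S : M → Set M := fun x => {y | f y + ↑(ε * dist y x) ≤ f x ∧ h y ≤ h x} with hS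
  -- basic facts about S
  have ne_top_of_mem : ∀ {y x : M}, y ∈ S x → f x ≠ ⊤ → f y ≠ ⊤ := by
    intro y x hy hx hT
    have h1 := hy.1
    rw [hT, EReal.top_add_coe] at h1
    exact hx (top_le_iff.1 h1)
  have Srefl : ∀ x, x ∈ S x := by
    intro x
    constructor
    · simp [dist_self]
    · exact le_rfl
  have Strans : ∀ {x y z : M}, y ∈ S x → z ∈ S y → z ∈ S x := by
    intro x y z hy hz
    refine ⟨?_, hz.2.trans hy.2⟩
    have h1 : f z + ↑(ε * dist z x) ≤ (f z + ↑(ε * dist z y)) + ↑(ε * dist y x) := by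
      rw [add_assoc, ← EReal.coe_add]
      apply add_le_add_right
      rw [EReal.coe_le_coe_iff, ← mul_add]
      exact mul_le_mul_of_nonneg_left (dist_triangle z y x) hε.le
    exact h1.trans ((add_le_add_left hz.1 _).trans hy.1)
  have Sclosed : ∀ x, IsClosed (S x) := by
    intro x
    have h1 : LowerSemicontinuous fun y => f y + ↑(ε * dist y x) := by
      apply hlsc.add'
      · exact (continuous_coe_real_ereal.comp
          (continuous_const.mul (continuous_id.dist continuous_const))).lowerSemicontinuous
      · intro y
        exact EReal.continuousAt_add (Or.inr (EReal.coe_ne_bot _)) (Or.inr (EReal.coe_ne_top _))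
    exact (h1.isClosed_preimage (f x)).inter (hh (h x))
  -- real-valued translation
  set A : M → ℝ := fun x => (f x).toReal with hA
  have coeA : ∀ x, f x ≠ ⊤ → (↑(A x) : EReal) = f x := fun x hx => EReal.coe_toReal hx (hbot x)
  have key_le : ∀ (p q : M) (r : ℝ), f p ≠ ⊤ → f q ≠ ⊤ →
      (f p + ↑r ≤ f q ↔ A p + r ≤ A q) := by
    intro p q r hp hq
    rw [← coeA p hp, ← coeA q hq, ← EReal.coe_add, EReal.coe_le_coe_iff]
  have hCA : ∀ x, f x ≠ ⊤ → C ≤ A x := by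
    intro x hx
    have := EReal.toReal_le_toReal (hC x) (EReal.coe_ne_bot C) hx
    rwa [EReal.toReal_coe] at this
  -- the inf
  set m : M → EReal := fun x => ⨅ z ∈ S x, f z with hm
  have hmle : ∀ x, m x ≤ f x := fun x => iInf₂_le x (Srefl x)
  have hmge : ∀ x, (C : EReal) ≤ m x := fun x => le_iInf₂ fun z _ => hC z
  have key : ∀ (n : ℕ) (x : M), f x ≠ ⊤ →
      ∃ y, y ∈ S x ∧ f y < m x + ↑((1 / 2 : ℝ) ^ n) := by
    intro n x hx
    by_contra hcon
    push_neg at hcon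
    have h1 : m x + ↑((1 / 2 : ℝ) ^ n) ≤ m x := le_iInf₂ fun z hz => hcon z hz
    have hmtop : m x ≠ ⊤ := fun ht => hx (top_le_iff.1 (ht ▸ hmle x))
    have hmbot : m x ≠ ⊥ := ((EReal.bot_lt_coe C).trans_le (hmge x)).ne'
    rw [← EReal.coe_toReal hmtop hmbot, ← EReal.coe_add, EReal.coe_le_coe_iff] at h1
    nlinarith [pow_pos (by norm_num : (0:ℝ) < 1 / 2) n]
  choose! F hF1 hF2 using key
  set u : ℕ → M := fun n => Nat.rec x₁ (fun k xk => F k xk) n with hu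
  have u0 : u 0 = x₁ := rfl
  have uS : ∀ n, u (n + 1) = F n (u n) := fun n => rfl
  have htop : ∀ n, f (u n) ≠ ⊤ := by
    intro n
    induction n with
    | zero => exact hx₁
    | succ k ih => exact ne_top_of_mem (uS k ▸ hF1 k (u k) ih) ih
  have hmem : ∀ n, u (n + 1) ∈ S (u n) := fun n => uS n ▸ hF1 n (u n) (htop n)
  have hlt : ∀ n, f (u (n + 1)) < m (u n) + ↑((1 / 2 : ℝ) ^ n) :=
    fun n => uS n ▸ hF2 n (u n) (htop n)
  have hchain : ∀ n k, n ≤ k → u k ∈ S (u n) := by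
    intro n k hk
    induction k, hk using Nat.le_induction with
    | base => exact Srefl (u n)
    | succ k hk ih => exact Strans ih (hmem k)
  have master : ∀ n k, n ≤ k → A (u k) + ε * dist (u k) (u n) ≤ A (u n) :=
    fun n k hk => (key_le _ _ _ (htop k) (htop n)).1 (hchain n k hk).1
  -- A ∘ u is antitone and bounded below, hence Cauchy
  have hanti : Antitone fun n => A (u n) := by
    apply antitone_nat_of_succ_le
    intro n
    have := master n (n + 1) (Nat.le_succ n)
    nlinarith [dist_nonneg (x := u (n + 1)) (y := u n)]
  have hbddA : BddBelow (Set.range fun n => A (u n)) :=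
    ⟨C, by rintro _ ⟨n, rfl⟩; exact hCA _ (htop n)⟩
  have hcauchyA : CauchySeq fun n => A (u n) :=
    (tendsto_atTop_ciInf hanti hbddA).cauchySeq
  have hcauchy : CauchySeq u := by
    rw [Metric.cauchySeq_iff']
    intro δ hδ
    obtain ⟨N, hN⟩ := Metric.cauchySeq_iff'.1 hcauchyA (ε * δ) (mul_pos hε hδ)
    refine ⟨N, fun n hn => ?_⟩
    have h1 := hN n hn
    rw [Real.dist_eq, abs_sub_lt_iff] at h1
    have h2 := master N n hn
    have := h1.2
    nlinarith
  obtain ⟨x, hx⟩ := cauchySeq_tendsto_of_complete hcauchy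
  have hxS : ∀ n, x ∈ S (u n) := by
    intro n
    refine (Sclosed (u n)).mem_of_tendsto hx ?_
    filter_upwards [eventually_ge_atTop n] with k hk
    exact hchain n k hk
  have hxtop : f x ≠ ⊤ := ne_top_of_mem (hxS 0) (u0 ▸ hx₁)
  refine ⟨x, ⟨(u0 ▸ (hxS 0)).1, (u0 ▸ (hxS 0)).2⟩, ?_⟩
  intro y hy1 hy2
  have hyS : y ∈ S x := ⟨hy1, hy2⟩
  have hySn : ∀ n, y ∈ S (u n) := fun n => Strans (hxS n) hyS
  have hytop : f y ≠ ⊤ := ne_top_of_mem hyS hxtop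
  have hdy : ∀ n, dist y (u (n + 1)) < (1 / 2 : ℝ) ^ n / ε := by
    intro n
    have h1 : m (u n) ≤ f y := iInf₂_le y (hySn n)
    have h2 : f (u (n + 1)) < f y + ↑((1 / 2 : ℝ) ^ n) :=
      (hlt n).trans_le (add_le_add_left h1 _)
    rw [← coeA _ (htop (n + 1)), ← coeA _ hytop, ← EReal.coe_add, EReal.coe_lt_coe_iff] at h2
    have h3 : A y + ε * dist y (u (n + 1)) ≤ A (u (n + 1)) :=
      (key_le _ _ _ hytop (htop (n + 1))).1 (hySn (n + 1)).1
    rw [lt_div_iff₀ hε]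
    nlinarith
  have hylim : Tendsto (fun n => u (n + 1)) atTop (𝓝 y) := by
    rw [tendsto_iff_dist_tendsto_zero]
    apply squeeze_zero (fun n => dist_nonneg)
      (fun n => (dist_comm (u (n + 1)) y ▸ (hdy n).le))
    simpa using (_root_.tendsto_pow_atTop_nhds_zero_of_lt_one (r := (1/2:ℝ)) (by norm_num) (by norm_num)).div_const ε
  have hxlim : Tendsto (fun n => u (n + 1)) atTop (𝓝 x) :=
    hx.comp (tendsto_add_atTop_nat 1)
  exact tendsto_nhds_unique hylim hxlim

theorem exists_epsCrit_local_slope' {M : Type*} [MetricSpace M] [CompleteSpace M]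
    (f : M → EReal) (g : M → ℝ)
    (hproper : ∃ x, f x ≠ ⊤) (hlsc : LowerSemicontinuous f)
    (hbdd : ∃ C : ℝ, ∀ x, (C : EReal) ≤ f x) (hg : Continuous g)
    (hslope : ∀ x, f x ≠ ⊤ → localSlope f x ≠ 0 →
      localSlope (fun y => (g y : EReal)) x < localSlope f x) :
    ∀ ε : ℝ, 0 < ε → ∀ x₀ : M,
      (∃ x, f x ≠ ⊤ ∧ localSlope f x ≤ ENNReal.ofReal ε ∧
        f x ≤ f x₀ - ↑(ε * dist x x₀) ∧ f x - ↑(g x) ≤ f x₀ - ↑(g x₀)) ∧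
      (⨅ y ∈ {y | f y ≠ ⊤ ∧ localSlope f y ≤ ENNReal.ofReal ε}, (f y - ↑(g y))) ≤
        f x₀ - ↑(g x₀) := by
  intro ε hε x₀
  obtain ⟨C, hC⟩ := hbdd
  have hbot : ∀ x, f x ≠ ⊥ := fun x => ((EReal.bot_lt_coe C).trans_le (hC x)).ne'
  set h : M → EReal := fun y => f y - ↑(g y) with hh_def
  have hhc : ∀ c : EReal, IsClosed {y | h y ≤ c} := by
    intro c
    have heq : h = fun y => f y + ↑(-g y) := by
      funext y
      show f y - ↑(g y) = f y + ↑(-g y)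
      rw [EReal.coe_neg, sub_eq_add_neg]
    have hl : LowerSemicontinuous h := by
      rw [heq]
      exact hlsc.add' ((continuous_coe_real_ereal.comp hg.neg).lowerSemicontinuous)
        (fun y => EReal.continuousAt_add (Or.inr (EReal.coe_ne_bot _))
          (Or.inr (EReal.coe_ne_top _)))
    exact hl.isClosed_preimage c
  obtain ⟨x₁, hx₁, hP₁, hQ₁⟩ :
      ∃ x₁, f x₁ ≠ ⊤ ∧ f x₁ + ↑(ε * dist x₁ x₀) ≤ f x₀ ∧ h x₁ ≤ h x₀ := by
    by_cases hx₀ : f x₀ = ⊤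
    · obtain ⟨z, hz⟩ := hproper
      have hhx₀ : h x₀ = ⊤ := by rw [hh_def]; simp [hx₀, EReal.top_sub_coe]
      exact ⟨z, hz, by rw [hx₀]; exact le_top, by rw [hhx₀]; exact le_top⟩
    · exact ⟨x₀, hx₀, by simp [dist_self], le_rfl⟩
  obtain ⟨x, ⟨hx1, hx2⟩, hmin⟩ := ekeland_aux f hlsc C hC h hhc ε hε x₁ hx₁
  have hxtop : f x ≠ ⊤ := by
    intro hT
    rw [hT, EReal.top_add_coe] at hx1
    exact hx₁ (top_le_iff.1 hx1)
  have hPx₀ : f x + ↑(ε * dist x x₀) ≤ f x₀ := by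
    calc f x + ↑(ε * dist x x₀) ≤ (f x + ↑(ε * dist x x₁)) + ↑(ε * dist x₁ x₀) := by
          rw [add_assoc, ← EReal.coe_add]
          apply add_le_add_right
          rw [EReal.coe_le_coe_iff, ← mul_add]
          exact mul_le_mul_of_nonneg_left (dist_triangle x x₁ x₀) hε.le
      _ ≤ f x₁ + ↑(ε * dist x₁ x₀) := add_le_add_left hx1 _
      _ ≤ f x₀ := hP₁
  have hQx₀ : h x ≤ h x₀ := hx2.trans hQ₁
  have hslope_le : localSlope f x ≤ ENNReal.ofReal ε := by
    by_contra hcon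
    rw [not_le] at hcon
    have hne0 : localSlope f x ≠ 0 := ((ENNReal.ofReal_pos.2 hε).trans hcon).ne'
    have hgf := hslope x hxtop hne0
    obtain ⟨c, hc1, hc2⟩ := exists_between (max_lt hcon hgf)
    have hctop : c ≠ ⊤ := (hc2.trans_le le_top).ne
    set r := c.toReal with hr_def
    have hcr : c = ENNReal.ofReal r := (ofReal_toReal hctop).symm
    have hεr : ε < r := by
      have h1 := (le_max_left (ENNReal.ofReal ε) _).trans_lt hc1
      rwa [ENNReal.ofReal_lt_iff_lt_toReal hε.le hctop] at h1
    have hr0 : 0 < r := hε.trans hεr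
    have hev : ∀ᶠ y in 𝓝[≠] x, erealPos ((g x : EReal) - ↑(g y)) / edist x y < c := by
      have h1 := (le_max_right (ENNReal.ofReal ε) _).trans_lt hc1
      rw [localSlope] at h1
      exact eventually_lt_of_limsup_lt h1
    have hfreq : ∃ᶠ y in 𝓝[≠] x, c < erealPos (f x - f y) / edist x y := by
      rw [localSlope] at hc2
      exact frequently_lt_of_lt_limsup (by isBoundedDefault) hc2
    obtain ⟨y, hy1, hy2, hyne⟩ :=
      (hfreq.and_eventually (hev.and eventually_mem_nhdsWithin)).exists
    have hxy : x ≠ y := fun e => hyne e.symm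
    have hd0 : edist x y ≠ 0 := (edist_pos.2 hxy).ne'
    have hdt : edist x y ≠ ⊤ := edist_ne_top x y
    have hdpos : 0 < dist x y := dist_pos.2 hxy
    have h1 : c * edist x y < erealPos (f x - f y) :=
      (ENNReal.lt_div_iff_mul_lt (Or.inl hd0) (Or.inl hdt)).1 hy1
    have hc0 : c ≠ 0 :=
      ((ENNReal.ofReal_pos.2 hε).trans ((le_max_left _ _).trans_lt hc1)).ne'
    have hytop : f y ≠ ⊤ := by
      intro hT
      rw [hT, EReal.sub_top] at h1
      have hz : erealPos ⊥ = 0 := by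
        rw [erealPos, if_neg bot_ne_top, EReal.toReal_bot, ENNReal.ofReal_zero]
      rw [hz] at h1
      exact (mul_ne_zero hc0 hd0) (le_antisymm (le_of_lt h1) zero_le)
    set A := (f x).toReal with hA_def
    set B := (f y).toReal with hB_def
    have hfx : (↑A : EReal) = f x := EReal.coe_toReal hxtop (hbot x)
    have hfy : (↑B : EReal) = f y := EReal.coe_toReal hytop (hbot y)
    rw [← hfx, ← hfy, ← EReal.coe_sub] at h1
    have hposc : ∀ t : ℝ, erealPos (t : EReal) = ENNReal.ofReal t := fun t => by
      rw [erealPos, if_neg (EReal.coe_ne_top t), EReal.toReal_coe]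
    have hpos : erealPos ((A - B : ℝ) : EReal) = ENNReal.ofReal (A - B) := hposc _
    rw [hpos, hcr, edist_dist, ← ENNReal.ofReal_mul hr0.le] at h1
    have hAB : r * dist x y < A - B :=
      (ENNReal.ofReal_lt_ofReal_iff_of_nonneg (mul_nonneg hr0.le dist_nonneg)).1 h1
    have h2 : erealPos ((g x : EReal) - ↑(g y)) < c * edist x y :=
      (ENNReal.div_lt_iff (Or.inl hd0) (Or.inl hdt)).1 hy2
    have hpos2 : erealPos ((g x : EReal) - ↑(g y)) = ENNReal.ofReal (g x - g y) := by
      rw [← EReal.coe_sub]; exact hposc _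
    rw [hpos2, hcr, edist_dist, ← ENNReal.ofReal_mul hr0.le] at h2
    have hG : g x - g y < r * dist x y :=
      (ENNReal.ofReal_lt_ofReal_iff (mul_pos hr0 hdpos)).1 h2
    have cond1 : f y + ↑(ε * dist y x) ≤ f x := by
      rw [← hfx, ← hfy, ← EReal.coe_add, EReal.coe_le_coe_iff, dist_comm y x]
      nlinarith
    have cond2 : h y ≤ h x := by
      rw [hh_def]
      show f y - ↑(g y) ≤ f x - ↑(g x)
      rw [← hfx, ← hfy, ← EReal.coe_sub, ← EReal.coe_sub, EReal.coe_le_coe_iff]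
      linarith
    exact hyne (hmin y cond1 cond2)
  have hle : f x ≤ f x₀ - ↑(ε * dist x x₀) :=
    (EReal.le_sub_iff_add_le (Or.inl (EReal.coe_ne_bot _))
      (Or.inl (EReal.coe_ne_top _))).2 hPx₀
  exact ⟨⟨x, hxtop, hslope_le, hle, hQx₀⟩,
    le_trans (iInf₂_le x ⟨hxtop, hslope_le⟩) hQx₀⟩

/-- for `f` proper lsc bounded below on a complete metric space and `g : M → ℝ`
continuous with `|∇f| > |∇g|` wherever `|∇f| ≠ 0` on `dom f`, for each `ε > 0` and `x₀`
there is an `ε`-critical point `x` of `f` with `f(x) ≤ f(x₀) - ε·ρ(x,x₀)` and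
`f(x₀) - g(x₀) ≥ f(x) - g(x)`; in particular `f - g ≥ inf_{ε-crit f} (f - g)` everywhere. -/
theorem exists_epsCrit_local_slope {M : Type*} [MetricSpace M] [CompleteSpace M]
    (f : M → EReal) (g : M → ℝ)
    (hproper : ∃ x, f x ≠ ⊤) (hlsc : LowerSemicontinuous f)
    (hbdd : ∃ C : ℝ, ∀ x, (C : EReal) ≤ f x) (hg : Continuous g)
    (hslope : ∀ x, f x ≠ ⊤ → localSlope f x ≠ 0 →
      localSlope (fun y => (g y : EReal)) x < localSlope f x) :
    ∀ ε : ℝ, 0 < ε → ∀ x₀ : M,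
      (∃ x, f x ≠ ⊤ ∧ localSlope f x ≤ ENNReal.ofReal ε ∧
        f x ≤ f x₀ - ↑(ε * dist x x₀) ∧ f x - ↑(g x) ≤ f x₀ - ↑(g x₀)) ∧
      (⨅ y ∈ {y | f y ≠ ⊤ ∧ localSlope f y ≤ ENNReal.ofReal ε}, (f y - ↑(g y))) ≤
        f x₀ - ↑(g x₀) := by
  exact exists_epsCrit_local_slope' f g hproper hlsc hbdd hg hslope
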